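/- Let (A, B, C) be a recollement of abelian categories with functors i^*, i_*, i^!, j_!, j^*, j_*, and assume that i^* and i^! are exact. Let (E1, M1) and (E2, M2) be monomorphism factorization systems in A and C, respectively. Set E = {monomorphisms f in B | i^*(f) ∈ E1 and j^*(f) ∈ E2} and M = {monomorphisms g in B | i^!(g) ∈ M1 and j^*(g) ∈ M2}. Then (E, M) is a monomorphism factorization system in B. -/

import Mathlib

open CategoryTheory CategoryTheory.Limits

namespace RecollementFS

/-- A recollement of abelian categories `(A, B, C)`. -/
structure AbelianRecollement (A B C : Type*) [Category A] [Category B] [Category C]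
    [Abelian A] [Abelian B] [Abelian C] where
  /-- `i_* : A ⥤ B` -/
  iStar : A ⥤ B
  /-- `i^* : B ⥤ A` -/
  iUpperStar : B ⥤ A
  /-- `i^! : B ⥤ A` -/
  iShriek : B ⥤ A
  /-- `j^* : B ⥤ C` -/
  jUpperStar : B ⥤ C
  /-- `j_! : C ⥤ B` -/
  jShriek : C ⥤ B
  /-- `j_* : C ⥤ B` -/
  jStar : C ⥤ B
  /-- `i^* ⊣ i_*` -/
  adj₁ : iUpperStar ⊣ iStar
  /-- `i_* ⊣ i^!` -/
  adj₂ : iStar ⊣ iShriek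
  /-- `j_! ⊣ j^*` -/
  adj₃ : jShriek ⊣ jUpperStar
  /-- `j^* ⊣ j_*` -/
  adj₄ : jUpperStar ⊣ jStar
  iStar_full : iStar.Full
  iStar_faithful : iStar.Faithful
  jShriek_full : jShriek.Full
  jShriek_faithful : jShriek.Faithful
  jStar_full : jStar.Full
  jStar_faithful : jStar.Faithful
  /-- `j^*(X) ≅ 0` iff `X` lies in the essential image of `i_*`. -/
  isZero_iff : ∀ X : B, IsZero (jUpperStar.obj X) ↔ ∃ Y : A, Nonempty (iStar.obj Y ≅ X)
  /-- the sequence `0 ⟶ i_* i^! X ⟶ X ⟶ j_* j^* X` is exact. -/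
  left_exact_seq : ∀ X : B, Mono (adj₂.counit.app X) ∧
    ∃ w : adj₂.counit.app X ≫ adj₄.unit.app X = 0,
      (ShortComplex.mk (adj₂.counit.app X) (adj₄.unit.app X) w).Exact
  /-- the sequence `j_! j^* X ⟶ X ⟶ i_* i^* X ⟶ 0` is exact. -/
  right_exact_seq : ∀ X : B, Epi (adj₁.unit.app X) ∧
    ∃ w : adj₃.counit.app X ≫ adj₁.unit.app X = 0,
      (ShortComplex.mk (adj₃.counit.app X) (adj₁.unit.app X) w).Exact

variable {𝒞 : Type*} [Category 𝒞] [Abelian 𝒞]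

/-- For monomorphisms `l`, `r`, `l ⊥ r` iff `Hom(coker l, coker r) = 0`. -/
def MonoPerp {A B X Y : 𝒞} (l : A ⟶ B) (r : X ⟶ Y) : Prop :=
  ∀ φ : cokernel l ⟶ cokernel r, φ = 0

/-- A monomorphism factorization system `(L, R)` in an abelian category. -/
structure IsMonoFactorizationSystem (L R : MorphismProperty 𝒞) : Prop where
  mono_of_L : ∀ {X Y : 𝒞} (f : X ⟶ Y), L f → Mono f
  mono_of_R : ∀ {X Y : 𝒞} (f : X ⟶ Y), R f → Mono f
  factor : ∀ {X Y : 𝒞} (f : X ⟶ Y), Mono f →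
    ∃ (K : 𝒞) (l : X ⟶ K) (r : K ⟶ Y), L l ∧ R r ∧ l ≫ r = f
  left_eq : ∀ {X Y : 𝒞} (f : X ⟶ Y),
    L f ↔ (Mono f ∧ ∀ {Z W : 𝒞} (g : Z ⟶ W), R g → MonoPerp f g)
  right_eq : ∀ {Z W : 𝒞} (g : Z ⟶ W),
    R g ↔ (Mono g ∧ ∀ {X Y : 𝒞} (f : X ⟶ Y), L f → MonoPerp f g)


open ZeroObject

section Helpers

lemma mono_from_zero {X : 𝒞} (f : (0 : 𝒞) ⟶ X) : Mono f :=
  ⟨fun u v _ => (isZero_zero 𝒞).eq_of_tgt u v⟩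

lemma from_zero_eq {X : 𝒞} (f g : (0 : 𝒞) ⟶ X) : f = g :=
  (isZero_zero 𝒞).eq_of_src f g

noncomputable def kernelIsoSourceOfEqZero {X Y : 𝒞} {g : X ⟶ Y} (hg : g = 0) :
    kernel g ≅ X where
  hom := kernel.ι g
  inv := kernel.lift g (𝟙 X) (by rw [hg]; simp)
  hom_inv_id := by
    rw [← cancel_mono (kernel.ι g)]
    simp
  inv_hom_id := by simp

lemma isIso_kernel_ι_of_eq_zero {X Y : 𝒞} {g : X ⟶ Y} (hg : g = 0) :
    IsIso (kernel.ι g) := by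
  have : kernel.ι g = (kernelIsoSourceOfEqZero hg).hom := rfl
  rw [this]; infer_instance

noncomputable def epiCokerKerIso {X Y : 𝒞} (g : X ⟶ Y) [Epi g] :
    cokernel (kernel.ι g) ≅ Y :=
  (cokernelIsCokernel (kernel.ι g)).coconePointUniqueUpToIso
    (Abelian.epiIsCokernelOfKernel (KernelFork.ofι (kernel.ι g) (kernel.condition g)) (kernelIsKernel g))

noncomputable def monoKerCokerIso {X Y : 𝒞} (i : X ⟶ Y) [Mono i] :
    kernel (cokernel.π i) ≅ X :=
  (kernelIsKernel (cokernel.π i)).conePointUniqueUpToIso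
    (Abelian.monoIsKernelOfCokernel (CokernelCofork.ofπ (cokernel.π i) (cokernel.condition i)) (cokernelIsCokernel i))

noncomputable def kernelIsoOfEq' {X Y : 𝒞} {f g : X ⟶ Y} (h : f = g) : kernel f ≅ kernel g := by
  subst h; exact Iso.refl _

noncomputable def cokernelIsoOfEq' {X Y : 𝒞} {f g : X ⟶ Y} (h : f = g) : cokernel f ≅ cokernel g := by
  subst h; exact Iso.refl _

lemma mono_factorThruCoimage' {P Q : 𝒞} (f : P ⟶ Q) : Mono (Abelian.factorThruCoimage f) := by
  have h : Abelian.factorThruCoimage f =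
      Abelian.coimageImageComparison f ≫ Abelian.image.ι f := by
    rw [← cancel_epi (Abelian.coimage.π f), Abelian.coimage.fac,
      Abelian.coimage_image_factorisation]
  rw [h]
  exact mono_comp _ _

end Helpers

section Torsion

/-- Perp transport along isos of cokernels. -/
lemma monoPerp_of_iso {A' B' X' Y' A'' B'' X'' Y'' : 𝒞}
    {f : A' ⟶ B'} {g : X' ⟶ Y'} {f' : A'' ⟶ B''} {g' : X'' ⟶ Y''}
    (e₁ : cokernel f ≅ cokernel f') (e₂ : cokernel g ≅ cokernel g')
    (h : MonoPerp f g) : MonoPerp f' g' := fun φ => by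
  have h0 := h (e₁.hom ≫ φ ≫ e₂.inv)
  calc φ = e₁.inv ≫ (e₁.hom ≫ φ ≫ e₂.inv) ≫ e₂.hom := by simp
  _ = 0 := by rw [h0]; simp

variable {L R : MorphismProperty 𝒞}

lemma L_iff_of_coker_iso (hLR : IsMonoFactorizationSystem L R)
    {X' Y' X'' Y'' : 𝒞} {f : X' ⟶ Y'} {f' : X'' ⟶ Y''}
    (hf : Mono f) (hf' : Mono f') (e : cokernel f ≅ cokernel f') :
    L f ↔ L f' := by
  rw [hLR.left_eq f, hLR.left_eq f']
  constructor
  · rintro ⟨-, h⟩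
    exact ⟨hf', fun g hg => monoPerp_of_iso e (Iso.refl _) (h g hg)⟩
  · rintro ⟨-, h⟩
    exact ⟨hf, fun g hg => monoPerp_of_iso e.symm (Iso.refl _) (h g hg)⟩

lemma R_iff_of_coker_iso (hLR : IsMonoFactorizationSystem L R)
    {X' Y' X'' Y'' : 𝒞} {g : X' ⟶ Y'} {g' : X'' ⟶ Y''}
    (hg : Mono g) (hg' : Mono g') (e : cokernel g ≅ cokernel g') :
    R g ↔ R g' := by
  rw [hLR.right_eq g, hLR.right_eq g']
  constructor
  · rintro ⟨-, h⟩
    exact ⟨hg', fun f hf => monoPerp_of_iso (Iso.refl _) e (h f hf)⟩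
  · rintro ⟨-, h⟩
    exact ⟨hg, fun f hf => monoPerp_of_iso (Iso.refl _) e.symm (h f hf)⟩

/-- The torsion class of objects associated to `L`. -/
def Tob (L : MorphismProperty 𝒞) (X : 𝒞) : Prop := L (0 : (0 : 𝒞) ⟶ X)

lemma L_iff_coker (hLR : IsMonoFactorizationSystem L R)
    {X' Y' : 𝒞} {f : X' ⟶ Y'} (hf : Mono f) :
    L f ↔ Tob L (cokernel f) := by
  haveI := mono_from_zero (0 : (0 : 𝒞) ⟶ cokernel f)
  exact L_iff_of_coker_iso hLR hf this cokernelZeroIsoTarget.symm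

lemma R_iff_coker (hLR : IsMonoFactorizationSystem L R)
    {X' Y' : 𝒞} {g : X' ⟶ Y'} (hg : Mono g) :
    R g ↔ Tob R (cokernel g) := by
  haveI := mono_from_zero (0 : (0 : 𝒞) ⟶ cokernel g)
  exact R_iff_of_coker_iso hLR hg this cokernelZeroIsoTarget.symm

/-- Abstract torsion pair data on object classes. -/
structure TorsionClasses (T F : 𝒞 → Prop) : Prop where
  T_iso : ∀ {X Y : 𝒞}, (X ≅ Y) → T X → T Y
  F_iso : ∀ {X Y : 𝒞}, (X ≅ Y) → F X → F Y
  vanish : ∀ {X Y : 𝒞}, T X → F Y → ∀ f : X ⟶ Y, f = 0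
  decomp : ∀ X : 𝒞, ∃ (t : 𝒞) (i : t ⟶ X), Mono i ∧ T t ∧ F (cokernel i)

lemma Tob_iso (hLR : IsMonoFactorizationSystem L R) {X Y : 𝒞} (e : X ≅ Y)
    (h : Tob L X) : Tob L Y := by
  haveI h1 := mono_from_zero (0 : (0 : 𝒞) ⟶ X)
  haveI h2 := mono_from_zero (0 : (0 : 𝒞) ⟶ Y)
  exact (L_iff_of_coker_iso hLR h1 h2
    (cokernelZeroIsoTarget ≪≫ e ≪≫ cokernelZeroIsoTarget.symm)).1 h

lemma Tob_iso_R (hLR : IsMonoFactorizationSystem L R) {X Y : 𝒞} (e : X ≅ Y)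
    (h : Tob R X) : Tob R Y := by
  haveI h1 := mono_from_zero (0 : (0 : 𝒞) ⟶ X)
  haveI h2 := mono_from_zero (0 : (0 : 𝒞) ⟶ Y)
  exact (R_iff_of_coker_iso hLR h1 h2
    (cokernelZeroIsoTarget ≪≫ e ≪≫ cokernelZeroIsoTarget.symm)).1 h

lemma mfs_torsionClasses (hLR : IsMonoFactorizationSystem L R) :
    TorsionClasses (Tob L) (Tob R) where
  T_iso e h := Tob_iso hLR e h
  F_iso e h := Tob_iso_R hLR e h
  vanish {X Y} hX hY f := by
    have hp : MonoPerp (0 : (0 : 𝒞) ⟶ X) (0 : (0 : 𝒞) ⟶ Y) :=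
      ((hLR.left_eq _).1 hX).2 _ hY
    have h0 := hp (cokernelZeroIsoTarget.hom ≫ f ≫ cokernelZeroIsoTarget.inv)
    calc f = cokernelZeroIsoTarget.inv ≫
        (cokernelZeroIsoTarget.hom ≫ f ≫ cokernelZeroIsoTarget.inv) ≫
          cokernelZeroIsoTarget.hom := by simp
    _ = 0 := by rw [h0]; simp
  decomp X := by
    haveI := mono_from_zero (0 : (0 : 𝒞) ⟶ X)
    obtain ⟨K, l, r, hl, hr, hlr⟩ := hLR.factor (0 : (0 : 𝒞) ⟶ X) this
    have hrm : Mono r := hLR.mono_of_R r hr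
    refine ⟨K, r, hrm, ?_, ?_⟩
    · have : l = (0 : (0 : 𝒞) ⟶ K) := from_zero_eq _ _
      rwa [this] at hl
    · exact (R_iff_coker hLR hrm).1 hr

end Torsion

section TorsionToMFS

variable {T F : 𝒞 → Prop}

lemma TorsionClasses.isZero_of_T_F (h : TorsionClasses T F) {X : 𝒞}
    (hT : T X) (hF : F X) : IsZero X := by
  rw [IsZero.iff_id_eq_zero]
  exact h.vanish hT hF _

/-- `F` is closed under subobjects. -/
lemma TorsionClasses.F_sub (h : TorsionClasses T F) {X Y : 𝒞} (m : X ⟶ Y)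
    (hm : Mono m) (hY : F Y) : F X := by
  obtain ⟨t, i, hi, hTt, hFc⟩ := h.decomp X
  have h0 : i ≫ m = 0 := h.vanish hTt hY _
  have hi0 : i = 0 := by
    haveI := hm
    rw [← cancel_mono m, h0, zero_comp]
  exact h.F_iso (cokernelIsoOfEq' hi0 ≪≫ cokernelZeroIsoTarget) hFc

/-- From torsion classes to a monomorphism factorization system. -/
theorem TorsionClasses.mfs (h : TorsionClasses T F) :
    IsMonoFactorizationSystem
      (fun _ _ f => Mono f ∧ T (cokernel f))
      (fun _ _ g => Mono g ∧ F (cokernel g)) where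
  mono_of_L _ hf := hf.1
  mono_of_R _ hg := hg.1
  factor {X Y} f hf := by
    haveI := hf
    obtain ⟨t, i, hi, hTt, hFc⟩ := h.decomp (cokernel f)
    haveI := hi
    set π := cokernel.π f with hπ
    set p := cokernel.π i with hp
    set K := kernel (π ≫ p) with hK
    set κ : K ⟶ Y := kernel.ι (π ≫ p) with hκ
    have hfπp : f ≫ π ≫ p = 0 := by
      rw [← Category.assoc, cokernel.condition, zero_comp]
    set l : X ⟶ K := kernel.lift (π ≫ p) f hfπp with hl
    have hlκ : l ≫ κ = f := kernel.lift_ι _ _ _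
    haveI hlm : Mono l := by
      have := hf
      rw [← hlκ] at this
      exact mono_of_mono l κ
    -- the induced map q : K ⟶ t
    have ilim : IsLimit (KernelFork.ofι i (cokernel.condition i)) :=
      Abelian.monoIsKernelOfCokernel
        (CokernelCofork.ofπ (cokernel.π i) (cokernel.condition i)) (cokernelIsCokernel i)
    have hκπp : (κ ≫ π) ≫ p = 0 := by
      rw [Category.assoc]; exact kernel.condition _
    obtain ⟨q, hq⟩ := KernelFork.IsLimit.lift' ilim (κ ≫ π) hκπp
    simp only [Fork.ι_ofι] at hq
    have hlq : l ≫ q = 0 := by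
      rw [← cancel_mono i, Category.assoc, hq, zero_comp, ← Category.assoc, hlκ,
        cokernel.condition]
    -- l is a kernel of q
    have flim : IsLimit (KernelFork.ofι f (cokernel.condition f)) :=
      Abelian.monoIsKernelOfCokernel
        (CokernelCofork.ofπ (cokernel.π f) (cokernel.condition f)) (cokernelIsCokernel f)
    have llim : IsLimit (KernelFork.ofι l hlq) := by
      refine KernelFork.IsLimit.ofι l hlq (fun {Z} z hz => ?_) (fun {Z} z hz => ?_)
        (fun {Z} z hz m' hm' => ?_)
      · -- lift
        have hzf : (z ≫ κ) ≫ π = 0 := by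
          rw [Category.assoc, ← hq, ← Category.assoc, hz, zero_comp]
        exact (KernelFork.IsLimit.lift' flim (z ≫ κ) (by simpa using hzf)).1
      · -- fac
        have hw := (KernelFork.IsLimit.lift' flim (z ≫ κ)
          (by
            have hzf : (z ≫ κ) ≫ π = 0 := by
              rw [Category.assoc, ← hq, ← Category.assoc, hz, zero_comp]
            simpa using hzf)).2
        simp only [Fork.ι_ofι] at hw
        rw [← cancel_mono κ, Category.assoc, hlκ]
        exact hw
      · have hw := (KernelFork.IsLimit.lift' flim (z ≫ κ)
          (by
            have hzf : (z ≫ κ) ≫ π = 0 := by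
              rw [Category.assoc, ← hq, ← Category.assoc, hz, zero_comp]
            simpa using hzf)).2
        simp only [Fork.ι_ofι] at hw
        rw [← cancel_mono f, hw, ← hm', Category.assoc, hlκ]
    -- q is epi, being the second projection of a pullback of the epi π along i
    have hcomm : κ ≫ π = q ≫ i := hq.symm
    have plim : IsLimit (PullbackCone.mk κ q hcomm) := by
      refine PullbackCone.IsLimit.mk hcomm
        (fun s => kernel.lift (π ≫ p) s.fst ?_) (fun s => kernel.lift_ι _ _ _)
        (fun s => ?_) (fun s m' h1 h2 => ?_)
      · rw [← Category.assoc, s.condition, Category.assoc, cokernel.condition, comp_zero]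
      · rw [← cancel_mono i, Category.assoc, ← hcomm, ← Category.assoc, kernel.lift_ι,
          s.condition]
      · rw [← cancel_mono κ, h1, kernel.lift_ι]
    haveI hqe : Epi q := by
      have := Abelian.epi_snd_of_isLimit π i plim
      exact this
    -- hence q is a cokernel of l
    have qcolim : IsColimit (CokernelCofork.ofπ q (KernelFork.condition (KernelFork.ofι l hlq))) :=
      Abelian.epiIsCokernelOfKernel (KernelFork.ofι l hlq) llim
    have e₁ : cokernel l ≅ t :=
      (cokernelIsCokernel l).coconePointUniqueUpToIso qcolim
    -- cokernel κ ≅ cokernel i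
    haveI : Epi (π ≫ p) := epi_comp _ _
    have e₂ : cokernel κ ≅ cokernel i := epiCokerKerIso (π ≫ p)
    exact ⟨K, l, κ, ⟨hlm, h.T_iso e₁.symm hTt⟩,
      ⟨inferInstance, h.F_iso e₂.symm hFc⟩, hlκ⟩
  left_eq {X Y} f := by
    constructor
    · rintro ⟨hf, hT⟩
      exact ⟨hf, fun g hg φ => h.vanish hT hg.2 φ⟩
    · rintro ⟨hf, hperp⟩
      refine ⟨hf, ?_⟩
      obtain ⟨t, i, hi, hTt, hFc⟩ := h.decomp (cokernel f)
      haveI := hi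
      -- (0 : 0 ⟶ cokernel i) is in the right class
      have hR : Mono (0 : (0 : 𝒞) ⟶ cokernel i) ∧ F (cokernel (0 : (0 : 𝒞) ⟶ cokernel i)) :=
        ⟨mono_from_zero _, h.F_iso cokernelZeroIsoTarget.symm hFc⟩
      have hp := hperp _ hR
      have h0 : cokernel.π i = 0 := by
        have := hp (cokernel.π i ≫ cokernelZeroIsoTarget.inv)
        calc cokernel.π i
            = (cokernel.π i ≫ cokernelZeroIsoTarget.inv) ≫ cokernelZeroIsoTarget.hom := by simp
        _ = 0 := by rw [this]; simp
      haveI : Epi i := Abelian.epi_of_cokernel_π_eq_zero i h0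
      haveI : IsIso i := isIso_of_mono_of_epi i
      exact h.T_iso (asIso i) hTt
  right_eq {Z W} g := by
    constructor
    · rintro ⟨hg, hF⟩
      exact ⟨hg, fun f hf φ => h.vanish hf.2 hF φ⟩
    · rintro ⟨hg, hperp⟩
      refine ⟨hg, ?_⟩
      obtain ⟨t, i, hi, hTt, hFc⟩ := h.decomp (cokernel g)
      have hL : Mono (0 : (0 : 𝒞) ⟶ t) ∧ T (cokernel (0 : (0 : 𝒞) ⟶ t)) :=
        ⟨mono_from_zero _, h.T_iso cokernelZeroIsoTarget.symm hTt⟩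
      have hp := hperp _ hL
      have hi0 : i = 0 := by
        have := hp (cokernelZeroIsoTarget.hom ≫ i)
        calc i = cokernelZeroIsoTarget.inv ≫ (cokernelZeroIsoTarget.hom ≫ i) := by simp
        _ = 0 := by rw [this]; simp
      exact h.F_iso (cokernelIsoOfEq' hi0 ≪≫ cokernelZeroIsoTarget) hFc

end TorsionToMFS

lemma IsMonoFactorizationSystem.of_iff {L R L' R' : MorphismProperty 𝒞}
    (h : IsMonoFactorizationSystem L R)
    (hL : ∀ {X Y : 𝒞} (f : X ⟶ Y), L f ↔ L' f)
    (hR : ∀ {X Y : 𝒞} (g : X ⟶ Y), R g ↔ R' g) :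
    IsMonoFactorizationSystem L' R' where
  mono_of_L f hf := h.mono_of_L f ((hL f).2 hf)
  mono_of_R g hg := h.mono_of_R g ((hR g).2 hg)
  factor f hf := by
    obtain ⟨K, l, r, hl, hr, hlr⟩ := h.factor f hf
    exact ⟨K, l, r, (hL l).1 hl, (hR r).1 hr, hlr⟩
  left_eq f := by
    rw [← hL f, h.left_eq f]
    constructor
    · rintro ⟨hm, hp⟩; exact ⟨hm, fun g hg => hp g ((hR g).2 hg)⟩
    · rintro ⟨hm, hp⟩; exact ⟨hm, fun g hg => hp g ((hR g).1 hg)⟩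
  right_eq g := by
    rw [← hR g, h.right_eq g]
    constructor
    · rintro ⟨hm, hp⟩; exact ⟨hm, fun f hf => hp f ((hL f).2 hf)⟩
    · rintro ⟨hm, hp⟩; exact ⟨hm, fun f hf => hp f ((hL f).1 hf)⟩

section Recollement

variable {A B C : Type*} [Category A] [Category B] [Category C]
  [Abelian A] [Abelian B] [Abelian C]

lemma additive_of_left_adjoint {F : A ⥤ B} {G : B ⥤ A} (adj : F ⊣ G) : F.Additive := by
  haveI : PreservesColimitsOfSize.{0,0} F := adj.leftAdjoint_preservesColimits
  haveI := preservesBinaryBiproducts_of_preservesBinaryCoproducts F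
  exact Functor.additive_of_preservesBinaryBiproducts F

lemma additive_of_right_adjoint {F : A ⥤ B} {G : B ⥤ A} (adj : F ⊣ G) : G.Additive := by
  haveI : PreservesLimitsOfSize.{0,0} G := adj.rightAdjoint_preservesLimits
  haveI := preservesBinaryBiproducts_of_preservesBinaryProducts G
  exact Functor.additive_of_preservesBinaryBiproducts G

variable (R : AbelianRecollement A B C)

lemma isZero_jUpper_iStar (Y : A) : IsZero (R.jUpperStar.obj (R.iStar.obj Y)) :=
  (R.isZero_iff _).2 ⟨Y, ⟨Iso.refl _⟩⟩

lemma isZero_iShriek_jStar (c : C) :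
    IsZero (R.iShriek.obj (R.jStar.obj c)) := by
  haveI : R.iShriek.Additive := additive_of_right_adjoint R.adj₂
  haveI : R.jStar.Additive := additive_of_right_adjoint R.adj₄
  rw [IsZero.iff_id_eq_zero]
  set Z := R.iShriek.obj (R.jStar.obj c) with hZ
  have h1 : (R.adj₄.homEquiv (R.iStar.obj Z) c).symm
      ((R.adj₂.homEquiv Z (R.jStar.obj c)).symm (𝟙 Z)) = 0 :=
    (isZero_jUpper_iStar R Z).eq_of_src _ _
  have h2 : (R.adj₂.homEquiv Z (R.jStar.obj c)).symm (𝟙 Z) = 0 := by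
    have h := congrArg (R.adj₄.homEquiv (R.iStar.obj Z) c) h1
    rw [Equiv.apply_symm_apply] at h
    rw [h, Adjunction.homEquiv_apply, Functor.map_zero, comp_zero]
  have h3 := congrArg (R.adj₂.homEquiv Z (R.jStar.obj c)) h2
  rw [Equiv.apply_symm_apply] at h3
  rw [h3, Adjunction.homEquiv_apply, Functor.map_zero, comp_zero]


set_option maxHeartbeats 2000000 in
theorem glued_torsionClasses
    (h₁ : PreservesFiniteLimits R.iUpperStar) (h₂ : PreservesFiniteColimits R.iUpperStar)
    (h₃ : PreservesFiniteLimits R.iShriek) (h₄ : PreservesFiniteColimits R.iShriek)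
    {T₁ F₁ : A → Prop} {T₂ F₂ : C → Prop}
    (hA : TorsionClasses T₁ F₁) (hC : TorsionClasses T₂ F₂) :
    TorsionClasses (fun X : B => T₁ (R.iUpperStar.obj X) ∧ T₂ (R.jUpperStar.obj X))
      (fun X : B => F₁ (R.iShriek.obj X) ∧ F₂ (R.jUpperStar.obj X)) := by
  haveI := R.iStar_full; haveI := R.iStar_faithful
  haveI := R.jStar_full; haveI := R.jStar_faithful
  haveI := h₁; haveI := h₂; haveI := h₃; haveI := h₄
  haveI : R.iStar.Additive := additive_of_left_adjoint R.adj₂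
  haveI : R.jStar.Additive := additive_of_right_adjoint R.adj₄
  haveI : R.iShriek.Additive := additive_of_right_adjoint R.adj₂
  haveI : PreservesLimitsOfSize.{0,0} R.jUpperStar := R.adj₃.rightAdjoint_preservesLimits
  haveI : PreservesColimitsOfSize.{0,0} R.jUpperStar := R.adj₄.leftAdjoint_preservesColimits
  refine ⟨?_, ?_, ?_, ?_⟩
  · -- T_iso
    intro X Y e h
    exact ⟨hA.T_iso (R.iUpperStar.mapIso e) h.1, hC.T_iso (R.jUpperStar.mapIso e) h.2⟩
  · -- F_iso
    intro X Y e h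
    exact ⟨hA.F_iso (R.iShriek.mapIso e) h.1, hC.F_iso (R.jUpperStar.mapIso e) h.2⟩
  · -- vanish
    intro X Y hT hF t
    have hjt : R.jUpperStar.map t = 0 := hC.vanish hT.2 hF.2 _
    have step1 : t ≫ R.adj₄.unit.app Y = 0 := by
      have hnat := R.adj₄.unit.naturality t
      simp only [Functor.id_map, Functor.comp_map] at hnat
      rw [hnat, hjt, Functor.map_zero, comp_zero]
    obtain ⟨hmono, w, hexact⟩ := R.left_exact_seq Y
    haveI : Mono (ShortComplex.mk (R.adj₂.counit.app Y) (R.adj₄.unit.app Y) w).f := hmono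
    have klim := hexact.fIsKernel
    obtain ⟨s, hs⟩ := KernelFork.IsLimit.lift' klim t step1
    simp only [Fork.ι_ofι] at hs
    have hinner : (R.adj₁.homEquiv X (R.iShriek.obj Y)).symm s = 0 := hA.vanish hT.1 hF.1 _
    have hs0 : s = 0 := by
      have h := congrArg (R.adj₁.homEquiv X (R.iShriek.obj Y)) hinner
      rw [Equiv.apply_symm_apply] at h
      rw [h, Adjunction.homEquiv_apply, Functor.map_zero, comp_zero]
    rw [← hs, hs0, zero_comp]
  · -- decomp
    intro X
    obtain ⟨t₂, i₂, hi₂, hTt₂, hFf₂⟩ := hC.decomp (R.jUpperStar.obj X)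
    haveI := hi₂
    set p₂ := cokernel.π i₂ with hp₂
    set φ : X ⟶ R.jStar.obj (cokernel i₂) := R.adj₄.unit.app X ≫ R.jStar.map p₂ with hφ
    set K := kernel φ with hK
    set κ : K ⟶ X := kernel.ι φ with hκ
    obtain ⟨t₁, i₁, hi₁, hTt₁, hFf₁⟩ := hA.decomp (R.iUpperStar.obj K)
    haveI := hi₁
    set p₁ := cokernel.π i₁ with hp₁
    set ψ : K ⟶ R.iStar.obj (cokernel i₁) := R.adj₁.unit.app K ≫ R.iStar.map p₁ with hψ
    set ι : kernel ψ ⟶ K := kernel.ι ψ with hι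
    have keyψ : R.iUpperStar.map ψ ≫ R.adj₁.counit.app (cokernel i₁) = p₁ := by
      rw [hψ, Functor.map_comp, Category.assoc]
      have hnat := R.adj₁.counit.naturality p₁
      simp only [Functor.id_map, Functor.comp_map] at hnat
      rw [hnat, ← Category.assoc, R.adj₁.left_triangle_components K, Category.id_comp]
    have keyφ : R.jUpperStar.map φ ≫ R.adj₄.counit.app (cokernel i₂) = p₂ := by
      rw [hφ, Functor.map_comp, Category.assoc]
      have hnat := R.adj₄.counit.naturality p₂
      simp only [Functor.id_map, Functor.comp_map] at hnat
      rw [hnat, ← Category.assoc, R.adj₄.left_triangle_components X, Category.id_comp]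
    have hzψ : R.jUpperStar.map ψ = 0 :=
      (isZero_jUpper_iStar R (cokernel i₁)).eq_of_tgt (R.jUpperStar.map ψ) 0
    have hzφ : R.iShriek.map φ = 0 :=
      (isZero_iShriek_jStar R (cokernel i₂)).eq_of_tgt (R.iShriek.map φ) 0
    refine ⟨kernel ψ, ι ≫ κ, mono_comp _ _, ⟨?_, ?_⟩, ?_, ?_⟩
    · -- T₁ (i^* (kernel ψ))
      have e : R.iUpperStar.obj (kernel ψ) ≅ t₁ :=
        PreservesKernel.iso R.iUpperStar ψ ≪≫
          (kernelCompMono (R.iUpperStar.map ψ) (R.adj₁.counit.app (cokernel i₁))).symm ≪≫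
          kernelIsoOfEq' keyψ ≪≫ monoKerCokerIso i₁
      exact hA.T_iso e.symm hTt₁
    · -- T₂ (j^* (kernel ψ))
      have e : R.jUpperStar.obj (kernel ψ) ≅ t₂ :=
        PreservesKernel.iso R.jUpperStar ψ ≪≫ kernelIsoSourceOfEqZero hzψ ≪≫
          PreservesKernel.iso R.jUpperStar φ ≪≫
          (kernelCompMono (R.jUpperStar.map φ) (R.adj₄.counit.app (cokernel i₂))).symm ≪≫
          kernelIsoOfEq' keyφ ≪≫ monoKerCokerIso i₂
      exact hC.T_iso e.symm hTt₂
    · -- F₁ (i^! (cokernel (ι ≫ κ)))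
      haveI hc1 : IsIso (kernelComparison φ R.iShriek) := by
        rw [← PreservesKernel.iso_hom]; infer_instance
      haveI : IsIso (kernel.ι (R.iShriek.map φ)) := isIso_kernel_ι_of_eq_zero hzφ
      have hmapκ : R.iShriek.map κ =
          kernelComparison φ R.iShriek ≫ kernel.ι (R.iShriek.map φ) :=
        (kernelComparison_comp_ι φ R.iShriek).symm
      haveI : IsIso (R.iShriek.map κ) := by rw [hmapκ]; infer_instance
      haveI hc2 : IsIso (kernelComparison ψ R.iShriek) := by
        rw [← PreservesKernel.iso_hom]; infer_instance
      have hmapι : R.iShriek.map ι =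
          kernelComparison ψ R.iShriek ≫ kernel.ι (R.iShriek.map ψ) :=
        (kernelComparison_comp_ι ψ R.iShriek).symm
      have e : R.iShriek.obj (cokernel (ι ≫ κ)) ≅ cokernel (kernel.ι (R.iShriek.map ψ)) :=
        PreservesCokernel.iso R.iShriek (ι ≫ κ) ≪≫
          cokernelIsoOfEq' (R.iShriek.map_comp ι κ) ≪≫
          cokernelCompIsIso (R.iShriek.map ι) (R.iShriek.map κ) ≪≫
          cokernelIsoOfEq' hmapι ≪≫
          cokernelEpiComp (kernelComparison ψ R.iShriek) (kernel.ι (R.iShriek.map ψ))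
      haveI : IsIso (R.adj₂.unit.app (cokernel i₁)) := inferInstance
      haveI := mono_factorThruCoimage' (R.iShriek.map ψ)
      have hsub : F₁ (cokernel (kernel.ι (R.iShriek.map ψ))) := by
        refine hA.F_sub (Abelian.factorThruCoimage (R.iShriek.map ψ) ≫
          inv (R.adj₂.unit.app (cokernel i₁))) ?_ hFf₁
        exact mono_comp _ _
      exact hA.F_iso e.symm hsub
    · -- F₂ (j^* (cokernel (ι ≫ κ)))
      haveI hc3 : IsIso (kernelComparison ψ R.jUpperStar) := by
        rw [← PreservesKernel.iso_hom]; infer_instance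
      haveI : IsIso (kernel.ι (R.jUpperStar.map ψ)) := isIso_kernel_ι_of_eq_zero hzψ
      have hmapι : R.jUpperStar.map ι =
          kernelComparison ψ R.jUpperStar ≫ kernel.ι (R.jUpperStar.map ψ) :=
        (kernelComparison_comp_ι ψ R.jUpperStar).symm
      haveI : IsIso (R.jUpperStar.map ι) := by rw [hmapι]; infer_instance
      haveI hc4 : IsIso (kernelComparison φ R.jUpperStar) := by
        rw [← PreservesKernel.iso_hom]; infer_instance
      have hmapκ : R.jUpperStar.map κ =
          kernelComparison φ R.jUpperStar ≫ kernel.ι (R.jUpperStar.map φ) :=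
        (kernelComparison_comp_ι φ R.jUpperStar).symm
      haveI hepiφ : Epi (R.jUpperStar.map φ) := by
        have h : R.jUpperStar.map φ = p₂ ≫ inv (R.adj₄.counit.app (cokernel i₂)) := by
          rw [← keyφ]; simp
        rw [h]; exact epi_comp _ _
      have e : R.jUpperStar.obj (cokernel (ι ≫ κ)) ≅ cokernel i₂ :=
        PreservesCokernel.iso R.jUpperStar (ι ≫ κ) ≪≫
          cokernelIsoOfEq' (R.jUpperStar.map_comp ι κ) ≪≫
          cokernelEpiComp (R.jUpperStar.map ι) (R.jUpperStar.map κ) ≪≫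
          cokernelIsoOfEq' hmapκ ≪≫
          cokernelEpiComp (kernelComparison φ R.jUpperStar) (kernel.ι (R.jUpperStar.map φ)) ≪≫
          epiCokerKerIso (R.jUpperStar.map φ) ≪≫
          asIso (R.adj₄.counit.app (cokernel i₂))
      exact hC.F_iso e.symm hFf₂


end Recollement

/-- gluing monomorphism factorization systems along a recollement of
abelian categories, assuming `i^*` and `i^!` are exact. -/
theorem glue_monoFactorizationSystem_of_recollement
    {A B C : Type*} [Category A] [Category B] [Category C]
    [Abelian A] [Abelian B] [Abelian C]
    (R : AbelianRecollement A B C)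
    (h₁ : PreservesFiniteLimits R.iUpperStar) (h₂ : PreservesFiniteColimits R.iUpperStar)
    (h₃ : PreservesFiniteLimits R.iShriek) (h₄ : PreservesFiniteColimits R.iShriek)
    (E₁ M₁ : MorphismProperty A) (E₂ M₂ : MorphismProperty C)
    (hA : IsMonoFactorizationSystem E₁ M₁) (hC : IsMonoFactorizationSystem E₂ M₂) :
    IsMonoFactorizationSystem
      (fun _ _ f => Mono f ∧ E₁ (R.iUpperStar.map f) ∧ E₂ (R.jUpperStar.map f))
      (fun _ _ g => Mono g ∧ M₁ (R.iShriek.map g) ∧ M₂ (R.jUpperStar.map g)) := by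
  haveI := h₁; haveI := h₂; haveI := h₃; haveI := h₄
  haveI : PreservesLimitsOfSize.{0,0} R.jUpperStar := R.adj₃.rightAdjoint_preservesLimits
  haveI : PreservesColimitsOfSize.{0,0} R.jUpperStar := R.adj₄.leftAdjoint_preservesColimits
  have tA := mfs_torsionClasses hA
  have tC := mfs_torsionClasses hC
  have tB := glued_torsionClasses R h₁ h₂ h₃ h₄ tA tC
  have key_iU : ∀ {X Y : B} (f : X ⟶ Y), Mono f →
      (E₁ (R.iUpperStar.map f) ↔ Tob E₁ (R.iUpperStar.obj (cokernel f))) := by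
    intro X Y f hf
    haveI := hf
    haveI hm : Mono (R.iUpperStar.map f) := R.iUpperStar.map_mono f
    rw [L_iff_coker hA hm]
    exact ⟨fun h => Tob_iso hA (PreservesCokernel.iso R.iUpperStar f).symm h,
      fun h => Tob_iso hA (PreservesCokernel.iso R.iUpperStar f) h⟩
  have key_jU : ∀ {X Y : B} (f : X ⟶ Y), Mono f →
      (E₂ (R.jUpperStar.map f) ↔ Tob E₂ (R.jUpperStar.obj (cokernel f))) := by
    intro X Y f hf
    haveI := hf
    haveI hm : Mono (R.jUpperStar.map f) := R.jUpperStar.map_mono f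
    rw [L_iff_coker hC hm]
    exact ⟨fun h => Tob_iso hC (PreservesCokernel.iso R.jUpperStar f).symm h,
      fun h => Tob_iso hC (PreservesCokernel.iso R.jUpperStar f) h⟩
  have key_iSh : ∀ {X Y : B} (g : X ⟶ Y), Mono g →
      (M₁ (R.iShriek.map g) ↔ Tob M₁ (R.iShriek.obj (cokernel g))) := by
    intro X Y g hg
    haveI := hg
    haveI hm : Mono (R.iShriek.map g) := R.iShriek.map_mono g
    rw [R_iff_coker hA hm]
    exact ⟨fun h => Tob_iso_R hA (PreservesCokernel.iso R.iShriek g).symm h,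
      fun h => Tob_iso_R hA (PreservesCokernel.iso R.iShriek g) h⟩
  have key_jU_M : ∀ {X Y : B} (g : X ⟶ Y), Mono g →
      (M₂ (R.jUpperStar.map g) ↔ Tob M₂ (R.jUpperStar.obj (cokernel g))) := by
    intro X Y g hg
    haveI := hg
    haveI hm : Mono (R.jUpperStar.map g) := R.jUpperStar.map_mono g
    rw [R_iff_coker hC hm]
    exact ⟨fun h => Tob_iso_R hC (PreservesCokernel.iso R.jUpperStar g).symm h,
      fun h => Tob_iso_R hC (PreservesCokernel.iso R.jUpperStar g) h⟩
  refine IsMonoFactorizationSystem.of_iff tB.mfs ?_ ?_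
  · intro X Y f
    constructor
    · rintro ⟨hm, hT⟩
      exact ⟨hm, (key_iU f hm).2 hT.1, (key_jU f hm).2 hT.2⟩
    · rintro ⟨hm, h1', h2'⟩
      exact ⟨hm, (key_iU f hm).1 h1', (key_jU f hm).1 h2'⟩
  · intro X Y g
    constructor
    · rintro ⟨hm, hF⟩
      exact ⟨hm, (key_iSh g hm).2 hF.1, (key_jU_M g hm).2 hF.2⟩
    · rintro ⟨hm, h1', h2'⟩
      exact ⟨hm, (key_iSh g hm).1 h1', (key_jU_M g hm).1 h2'⟩


end RecollementFS
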